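/- Let A ∈ ℂ^{n×n} be Hermitian. If the multiset of diagonal entries of A equals the multiset of eigenvalues of A (eigenvalues counted with multiplicity, regarded as complex numbers), then A is diagonal, i.e., A_{ij} = 0 for all i ≠ j. -/

import Mathlib

open Matrix

/-- Lemma 4.3 of the paper: a Hermitian matrix whose multiset of diagonal entries
equals its multiset of eigenvalues (with multiplicity) is diagonal. -/
theorem hermitian_diag_eq_eigenvalues_imp_diagonal
    (n : ℕ) (A : Matrix (Fin n) (Fin n) ℂ) (hA : A.IsHermitian)
    (h : (Finset.univ.val.map fun i : Fin n => A i i) =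
         (Finset.univ.val.map fun i : Fin n => (hA.eigenvalues i : ℂ))) :
    ∀ i j : Fin n, i ≠ j → A i j = 0 := by
  -- sum of squares of diagonal entries = sum of squares of eigenvalues
  have hsq : ∑ i, (A i i) ^ 2 = ∑ i, ((hA.eigenvalues i : ℂ)) ^ 2 := by
    have := congrArg (fun m : Multiset ℂ => (m.map (fun x => x ^ 2)).sum) h
    simpa [Multiset.map_map, Function.comp_def, Finset.sum] using this
  -- trace of A * A computed via the spectral theorem
  have hdiagconj : ∀ i, (starRingEnd ℂ) (A i i) = A i i := by
    intro i
    have := congrFun (congrFun hA i) i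
    simpa [conjTranspose_apply] using this
  have hconj : ∀ i j, A j i = (starRingEnd ℂ) (A i j) := by
    intro i j
    have := congrFun (congrFun hA j) i
    simpa [conjTranspose_apply] using this.symm
  have htr : (A * A).trace = ∑ i, ((hA.eigenvalues i : ℂ)) ^ 2 := by
    conv_lhs => rw [hA.spectral_theorem, Unitary.conjStarAlgAut_apply]
    set U := (hA.eigenvectorUnitary : Matrix (Fin n) (Fin n) ℂ) with hU
    set D := diagonal (RCLike.ofReal ∘ hA.eigenvalues : Fin n → ℂ) with hD
    have hUU : star U * U = 1 := Unitary.coe_star_mul_self hA.eigenvectorUnitary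
    have : U * D * star U * (U * D * star U) = U * (D * D) * star U := by
      rw [mul_assoc (U * D) (star U) (U * D * star U), ← mul_assoc (star U) (U * D) (star U),
        ← mul_assoc (star U) U D, hUU, one_mul]
      simp only [mul_assoc]
    rw [this, trace_mul_cycle, ← mul_assoc, hUU, one_mul, hD, diagonal_mul_diagonal,
      trace_diagonal]
    simp [Pi.mul_apply, Function.comp, sq]
  -- trace of A * A computed entrywise
  have htr2 : (A * A).trace = ∑ i, ∑ j, A i j * (starRingEnd ℂ) (A i j) := by
    rw [trace]
    simp only [diag_apply, mul_apply]
    refine Finset.sum_congr rfl fun i _ => Finset.sum_congr rfl fun j _ => ?_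
    rw [hconj i j]
  -- hence the off-diagonal part has zero sum
  have hz : ∑ i, ∑ j ∈ Finset.univ \ {i}, A i j * (starRingEnd ℂ) (A i j) = 0 := by
    have hsplit : ∀ i : Fin n, ∑ j, A i j * (starRingEnd ℂ) (A i j) =
        A i i * (starRingEnd ℂ) (A i i) +
          ∑ j ∈ Finset.univ \ {i}, A i j * (starRingEnd ℂ) (A i j) := by
      intro i
      rw [← Finset.sum_sdiff (Finset.subset_univ {i}), Finset.sum_singleton, add_comm]
    have h1 : ∑ i, ∑ j, A i j * (starRingEnd ℂ) (A i j) =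
        ∑ i, (A i i) ^ 2 + ∑ i, ∑ j ∈ Finset.univ \ {i}, A i j * (starRingEnd ℂ) (A i j) := by
      rw [← Finset.sum_add_distrib]
      refine Finset.sum_congr rfl fun i _ => ?_
      rw [hsplit i, hdiagconj i, sq]
    have := htr2.symm.trans htr
    rw [h1, ← hsq] at this
    linear_combination this
  -- each term is a nonnegative real (normSq); conclude all are zero
  have hz' : ∑ i, ∑ j ∈ Finset.univ \ {i}, (Complex.normSq (A i j) : ℝ) = 0 := by
    have : ((∑ i, ∑ j ∈ Finset.univ \ {i}, (Complex.normSq (A i j) : ℝ) : ℝ) : ℂ) = 0 := by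
      push_cast
      rw [← hz]
      refine Finset.sum_congr rfl fun i _ => Finset.sum_congr rfl fun j _ => ?_
      rw [Complex.mul_conj]
    exact_mod_cast this
  intro i j hij
  have hterm : Complex.normSq (A i j) = 0 := by
    have hnn : ∀ i : Fin n, ∀ j ∈ Finset.univ \ {i}, 0 ≤ (Complex.normSq (A i j) : ℝ) :=
      fun i j _ => Complex.normSq_nonneg _
    have h0 : ∀ i : Fin n, ∑ j ∈ Finset.univ \ {i}, (Complex.normSq (A i j) : ℝ) = 0 := by
      have := (Finset.sum_eq_zero_iff_of_nonneg
        (fun i _ => Finset.sum_nonneg (hnn i))).mp hz'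
      exact fun i => this i (Finset.mem_univ i)
    have := (Finset.sum_eq_zero_iff_of_nonneg (hnn i)).mp (h0 i) j
      (by simp [Finset.mem_sdiff, hij.symm])
    exact this
  exact Complex.normSq_eq_zero.mp hterm
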